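/- Every real m×m matrix B can be written as B = T·W where T and W are real symmetric m×m matrices. -/

import Mathlib

open Matrix Polynomial Module DirectSum


theorem exists_bilin_component {K : Type} [Field K] (q : K[X]) (hq : q ≠ 0) :
    ∃ φ : LinearMap.BilinForm K (AdjoinRoot q),
      (∀ u v, φ u v = φ v u) ∧
      (∀ u v, φ (AdjoinRoot.root q * u) v = φ u (AdjoinRoot.root q * v)) ∧
      (∀ u, u ≠ 0 → ∃ v, φ u v ≠ 0) := by
  set pb := AdjoinRoot.powerBasis hq with hpb
  rcases Nat.eq_zero_or_pos pb.dim with hn | hn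
  · refine ⟨0, by simp, by simp, ?_⟩
    intro u hu
    exfalso
    apply hu
    apply pb.basis.repr.injective
    apply Finsupp.ext
    intro i
    exact absurd i.2 (by omega)
  · set n := pb.dim with hdim
    set ℓ : AdjoinRoot q →ₗ[K] K := pb.basis.coord ⟨n - 1, by omega⟩ with hℓ
    refine ⟨(LinearMap.mul K (AdjoinRoot q)).compr₂ ℓ, ?_, ?_, ?_⟩
    · intro u v
      simp [mul_comm]
    · intro u v
      simp [mul_left_comm, mul_comm, mul_assoc]
    · intro u hu
      set c := pb.basis.repr u with hc
      have hc0 : c ≠ 0 := fun h => hu (by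
        apply pb.basis.repr.injective
        simpa [← hc] using h)
      have hs : c.support.Nonempty := Finsupp.support_nonempty_iff.mpr hc0
      set d := c.support.max' hs with hd
      have hcd : c d ≠ 0 := Finsupp.mem_support_iff.mp (c.support.max'_mem hs)
      refine ⟨pb.gen ^ (n - 1 - (d : ℕ)), ?_⟩
      have hu' : u = ∑ i : Fin n, c i • pb.basis i := (pb.basis.sum_repr u).symm
      have key : ∀ i : Fin n, c i * ℓ (pb.basis i * pb.gen ^ (n - 1 - (d : ℕ)))
          = if i = d then c d else 0 := by
        intro i
        by_cases hid : (i : ℕ) ≤ (d : ℕ)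
        · have hb : pb.basis i * pb.gen ^ (n - 1 - (d : ℕ))
              = pb.basis ⟨(i : ℕ) + (n - 1 - (d : ℕ)), by omega⟩ := by
            simp only [PowerBasis.coe_basis]
            rw [← pow_add]
          rw [hb, hℓ, Basis.coord_apply, Basis.repr_self]
          by_cases hieq : i = d
          · subst hieq
            rw [if_pos rfl]
            rw [Finsupp.single_apply, if_pos (by ext; simp; omega)]
            ring
          · rw [if_neg hieq]
            rw [Finsupp.single_apply, if_neg (by
              intro h
              apply hieq
              have : (i : ℕ) + (n - 1 - (d : ℕ)) = n - 1 := by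
                have := congrArg (fun x : Fin n => (x : ℕ)) h
                simpa using this
              have hdn : (d : ℕ) < n := d.2
              ext
              omega)]
            ring
        · have hci : c i = 0 := by
            rw [← Finsupp.notMem_support_iff]
            intro hmem
            exact hid (Finset.le_max' _ _ hmem)
          simp [hci, if_neg (fun h : i = d => hid (le_of_eq (by rw [h])))]
      calc ((LinearMap.mul K (AdjoinRoot q)).compr₂ ℓ) u (pb.gen ^ (n - 1 - (d : ℕ)))
          = ∑ i : Fin n, c i * ℓ (pb.basis i * pb.gen ^ (n - 1 - (d : ℕ))) := by
            rw [hu']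
            simp [Finset.sum_mul, mul_comm, mul_left_comm]
        _ = ∑ i : Fin n, if i = d then c d else 0 := Finset.sum_congr rfl fun i _ => key i
        _ = c d := by rw [Finset.sum_ite_eq' Finset.univ d fun _ => c d]; simp
      exact hcd


theorem exists_bilin_directSum {K : Type} [Field K] {ι : Type} [DecidableEq ι]
    (N : ι → Type) [∀ i, AddCommGroup (N i)] [∀ i, Module K[X] (N i)] [∀ i, Module K (N i)]
    [∀ i, IsScalarTower K K[X] (N i)]
    (φ : ∀ i, LinearMap.BilinForm K (N i))
    (hsymm : ∀ i u v, φ i u v = φ i v u)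
    (hX : ∀ i u v, φ i ((X : K[X]) • u) v = φ i u ((X : K[X]) • v))
    (hnd : ∀ i u, u ≠ 0 → ∃ v, φ i u v ≠ 0) :
    ∃ Φ : LinearMap.BilinForm K (⨁ i, N i),
      (∀ x y, Φ x y = Φ y x) ∧
      (∀ x y, Φ ((X : K[X]) • x) y = Φ x ((X : K[X]) • y)) ∧
      (∀ x, x ≠ 0 → ∃ y, Φ x y ≠ 0) := by
  set Φ : LinearMap.BilinForm K (⨁ i, N i) :=
    DirectSum.toModule K ι _ (fun i => (φ i).compl₂ (DirectSum.component K ι N i)) with hΦ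
  have hev : ∀ (i) (u : N i) (y : ⨁ i, N i),
      Φ (DirectSum.lof K ι N i u) y = φ i u (y i) := by
    intro i u y
    rw [hΦ, DirectSum.toModule_lof]
    rfl
  have hsm : ∀ (i) (u : N i), (X : K[X]) • (DirectSum.lof K ι N i u)
      = DirectSum.lof K ι N i ((X : K[X]) • u) := by
    intro i u
    apply DFinsupp.ext
    intro j
    rw [DFinsupp.smul_apply]
    by_cases h : i = j
    · subst h
      rw [DirectSum.lof_eq_of, DirectSum.of_eq_same, DirectSum.lof_eq_of, DirectSum.of_eq_same]
    · rw [DirectSum.lof_eq_of, DirectSum.of_eq_of_ne _ _ _ (Ne.symm h),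
        DirectSum.lof_eq_of, DirectSum.of_eq_of_ne _ _ _ (Ne.symm h), smul_zero]
  have hsym : ∀ x y, Φ x y = Φ y x := by
    intro x y
    induction x using DirectSum.induction_on with
    | zero => simp
    | of i u =>
      induction y using DirectSum.induction_on with
      | zero => simp
      | of j v =>
        rw [← DirectSum.lof_eq_of K, ← DirectSum.lof_eq_of K, hev, hev]
        by_cases h : i = j
        · subst h
          rw [DirectSum.lof_eq_of, DirectSum.of_eq_same, DirectSum.lof_eq_of,
            DirectSum.of_eq_same]
          exact hsymm i u v
        · rw [DirectSum.lof_eq_of, DirectSum.of_eq_of_ne _ _ _ h,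
            DirectSum.lof_eq_of, DirectSum.of_eq_of_ne _ _ _ (Ne.symm h)]
          simp
      | add y1 y2 h1 h2 =>
        simp only [map_add, LinearMap.add_apply, h1, h2]
    | add x1 x2 h1 h2 =>
      simp only [map_add, LinearMap.add_apply, h1, h2]
  refine ⟨Φ, hsym, ?_, ?_⟩
  · intro x y
    induction x using DirectSum.induction_on with
    | zero => simp
    | of i u =>
      rw [← DirectSum.lof_eq_of K, hsm, hev, hev, hX, DFinsupp.smul_apply]
    | add x1 x2 h1 h2 =>
      simp only [smul_add, map_add, LinearMap.add_apply, h1, h2]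
  · intro x hx
    have : ∃ i, x i ≠ 0 := by
      by_contra h
      push_neg at h
      exact hx (DFinsupp.ext h)
    obtain ⟨i, hi⟩ := this
    obtain ⟨v, hv⟩ := hnd i (x i) hi
    refine ⟨DirectSum.lof K ι N i v, ?_⟩
    rw [hsym, hev]
    rw [hsymm]
    exact hv

theorem exists_symm_conj {m : ℕ} (B : Matrix (Fin m) (Fin m) ℝ) :
    ∃ S : Matrix (Fin m) (Fin m) ℝ, S.IsSymm ∧ IsUnit S.det ∧ Bᵀ * S = S * B := by
  classical
  set f : (Fin m → ℝ) →ₗ[ℝ] (Fin m → ℝ) := Matrix.mulVecLin B with hf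
  have htor : Module.IsTorsion ℝ[X] (Module.AEval' f) := by
    intro x
    refine ⟨⟨f.charpoly, mem_nonZeroDivisors_of_ne_zero f.charpoly_monic.ne_zero⟩, ?_⟩
    show (f.charpoly : ℝ[X]) • x = 0
    apply (Module.AEval'.of f).symm.injective
    rw [map_zero, Module.AEval.of_symm_smul, LinearMap.aeval_self_charpoly, zero_smul]
  obtain ⟨ι, hι, p, hp, e, ⟨eqv⟩⟩ :=
    Module.equiv_directSum_of_isTorsion (R := ℝ[X]) (M := Module.AEval' f) htor
  haveI := hι
  haveI : DecidableEq ι := Classical.decEq ι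
  have hq : ∀ i, p i ^ e i ≠ 0 := fun i => pow_ne_zero _ (hp i).ne_zero
  choose φ hφ1 hφ2 hφ3 using fun i => exists_bilin_component (p i ^ e i) (hq i)
  have hXsmul : ∀ (i) (u : ℝ[X] ⧸ (ℝ[X] ∙ (p i ^ e i))),
      (X : ℝ[X]) • u = (show ℝ[X] ⧸ (ℝ[X] ∙ (p i ^ e i)) from
        AdjoinRoot.root (p i ^ e i) * (show AdjoinRoot (p i ^ e i) from u)) := by
    intro i u
    obtain ⟨v, rfl⟩ := Submodule.Quotient.mk_surjective _ u
    rfl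
  obtain ⟨Φ₀, hΦsym, hΦX, hΦnd⟩ :=
    exists_bilin_directSum (K := ℝ) (fun i => ℝ[X] ⧸ (ℝ[X] ∙ (p i ^ e i))) φ hφ1
      (fun i u v => by rw [hXsmul, hXsmul]; exact hφ2 i u v) hφ3
  set g : (Fin m → ℝ) ≃ₗ[ℝ] (⨁ i, ℝ[X] ⧸ (ℝ[X] ∙ (p i ^ e i))) :=
    (Module.AEval'.of f).trans (eqv.restrictScalars ℝ) with hg
  have hgf : ∀ x, g (f x) = (X : ℝ[X]) • g x := by
    intro x
    show eqv ((Module.AEval'.of f) (f x)) = (X : ℝ[X]) • eqv ((Module.AEval'.of f) x)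
    rw [← Module.AEval'.X_smul_of, _root_.map_smul]
  set Φ : LinearMap.BilinForm ℝ (Fin m → ℝ) := Φ₀.compl₁₂ g.toLinearMap g.toLinearMap with hΦ
  have hΦap : ∀ v w, Φ v w = Φ₀ (g v) (g w) := fun v w => rfl
  set S := LinearMap.BilinForm.toMatrix' Φ with hS
  have hdot : ∀ v w, v ⬝ᵥ S *ᵥ w = Φ v w := by
    intro v w
    rw [← Matrix.toBilin'_apply', hS, Matrix.toBilin'_toMatrix']
  have hΦf : ∀ v w, Φ (B *ᵥ v) w = Φ v (B *ᵥ w) := by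
    intro v w
    have h1 : B *ᵥ v = f v := rfl
    have h2 : B *ᵥ w = f w := rfl
    rw [h1, h2, hΦap, hΦap, hgf, hgf, hΦX]
  refine ⟨S, ?_, ?_, ?_⟩
  · apply Matrix.IsSymm.ext
    intro i j
    rw [hS, LinearMap.BilinForm.toMatrix'_apply, LinearMap.BilinForm.toMatrix'_apply, hΦap, hΦap, hΦsym]
  · rw [isUnit_iff_ne_zero]
    intro hdet
    have : (Sᵀ).det = 0 := by rw [Matrix.det_transpose]; exact hdet
    obtain ⟨v, hv0, hv⟩ := (Matrix.exists_mulVec_eq_zero_iff).mpr this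
    have hgv : g v ≠ 0 := fun h => hv0 (by simpa using g.map_eq_zero_iff.mp h)
    obtain ⟨y, hy⟩ := hΦnd (g v) hgv
    apply hy
    have : Φ v (g.symm y) = 0 := by
      rw [← hdot, Matrix.dotProduct_mulVec, ← Matrix.mulVec_transpose, hv]
      simp
    rw [hΦap, g.apply_symm_apply] at this
    exact this
  · have h3 : ∀ v w, v ⬝ᵥ (Bᵀ * S) *ᵥ w = v ⬝ᵥ (S * B) *ᵥ w := by
      intro v w
      rw [← Matrix.mulVec_mulVec, ← Matrix.mulVec_mulVec]
      rw [Matrix.dotProduct_mulVec v Bᵀ, Matrix.vecMul_transpose]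
      rw [hdot, hdot]
      exact hΦf v w
    ext i j
    have := h3 (Pi.single i 1) (Pi.single j 1)
    rw [← Matrix.toBilin'_apply', ← Matrix.toBilin'_apply',
      Matrix.toBilin'_single, Matrix.toBilin'_single] at this
    exact this

theorem stmt_13 {m : ℕ} (B : Matrix (Fin m) (Fin m) ℝ) :
    ∃ T W : Matrix (Fin m) (Fin m) ℝ, T.IsSymm ∧ W.IsSymm ∧ B = T * W := by
  obtain ⟨S, hS, hdet, hcomm⟩ := exists_symm_conj B
  refine ⟨B * S⁻¹, S, ?_, hS, ?_⟩
  · show (B * S⁻¹)ᵀ = B * S⁻¹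
    rw [Matrix.transpose_mul, Matrix.transpose_nonsing_inv, hS]
    calc S⁻¹ * Bᵀ = S⁻¹ * (Bᵀ * S) * S⁻¹ := by
          rw [Matrix.mul_assoc (S⁻¹) _ _, Matrix.mul_assoc Bᵀ S _,
            Matrix.mul_nonsing_inv S hdet, Matrix.mul_one]
      _ = S⁻¹ * (S * B) * S⁻¹ := by rw [hcomm]
      _ = B * S⁻¹ := by
          rw [← Matrix.mul_assoc, Matrix.nonsing_inv_mul S hdet, Matrix.one_mul]
  · rw [Matrix.mul_assoc, Matrix.nonsing_inv_mul S hdet, Matrix.mul_one]
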